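/- In the Huber ε-contamination setting, suppose additionally that |f(w, ξ) − f(u_P, ξ)| ≤ B for all w ∈ W for P-almost every ξ, where u_P ∈ argmin_{w∈W} risk_P(w). Let w_t : Ξ^{t−1} → W be measurable prediction functions and w̄_T = (1/T)·Σ_{t=1}^T w_t. Then for every 0 < δ ≤ 1, with P_ε-probability at least 1 − δ: risk_P(w̄_T) − risk_P(u_P) ≤ (Σ_{t : M_t = 0} (f(w_t, ξ_t) − f(u_P, ξ_t))) / ((1−ε)·T) + (2B/(1−ε))·√((2/T)·ln(1/δ)). -/

import Mathlib

open MeasureTheory ProbabilityTheory Real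

lemma intBdd {α : Type*} [MeasurableSpace α] {m : Measure α} [IsFiniteMeasure m]
    {h : α → ℝ} (hm : AEStronglyMeasurable h m) {C : ℝ} (hC : ∀ z, |h z| ≤ C) :
    Integrable h m :=
  (integrable_const C).mono' hm (Filter.Eventually.of_forall fun z => by
    simpa [Real.norm_eq_abs] using hC z)

/-- Hoeffding-type mgf bound for a centered bounded random variable, symmetric interval. -/
lemma mgfAux {α : Type*} [MeasurableSpace α] (m : Measure α) [IsProbabilityMeasure m]
    (Y : α → ℝ) (hYm : Measurable Y) (c : ℝ) (hc : 0 < c) (hbd : ∀ z, |Y z| ≤ c)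
    (hmean : ∫ z, Y z ∂m = 0) (l : ℝ) :
    ∫ z, Real.exp (l * Y z) ∂m ≤ Real.exp (l ^ 2 * c ^ 2 / 2) := by
  have hE1 : (0:ℝ) < Real.exp (-(l*c)) := Real.exp_pos _
  have hE2 : (0:ℝ) < Real.exp (l*c) := Real.exp_pos _
  set E1 := Real.exp (-(l*c)) with hE1def
  set E2 := Real.exp (l*c) with hE2def
  have hpt : ∀ z, Real.exp (l * Y z) ≤ (E1 + E2)/2 + ((E2 - E1)/(2*c)) * Y z := by
    intro z
    have hy := hbd z
    have hy1 : -c ≤ Y z := (abs_le.1 hy).1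
    have hy2 : Y z ≤ c := (abs_le.1 hy).2
    have ha : (0:ℝ) ≤ (c - Y z)/(2*c) := by
      apply div_nonneg (by linarith) (by linarith)
    have hb : (0:ℝ) ≤ (c + Y z)/(2*c) := by
      apply div_nonneg (by linarith) (by linarith)
    have hab : (c - Y z)/(2*c) + (c + Y z)/(2*c) = 1 := by field_simp; ring
    have hcv := convexOn_exp.2 (Set.mem_univ (l * (-c))) (Set.mem_univ (l * c)) ha hb hab
    simp only [smul_eq_mul] at hcv
    have harg : (c - Y z)/(2*c) * (l * (-c)) + (c + Y z)/(2*c) * (l * c) = l * Y z := by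
      field_simp; ring
    rw [harg] at hcv
    refine hcv.trans (le_of_eq ?_)
    have : l * (-c) = -(l*c) := by ring
    rw [this, ← hE1def, ← hE2def]
    field_simp
    ring
  have hYint : Integrable Y m := intBdd hYm.aestronglyMeasurable (fun z => hbd z)
  have hint1 : Integrable (fun z => Real.exp (l * Y z)) m := by
    refine intBdd ((hYm.const_mul l).exp).aestronglyMeasurable (C := Real.exp (|l| * c)) ?_
    intro z
    rw [abs_of_pos (Real.exp_pos _)]
    refine Real.exp_le_exp.2 ?_
    calc l * Y z ≤ |l * Y z| := le_abs_self _
    _ = |l| * |Y z| := abs_mul _ _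
    _ ≤ |l| * c := by gcongr; exact hbd z
  have hint2 : Integrable (fun z => (E1 + E2)/2 + ((E2 - E1)/(2*c)) * Y z) m :=
    (integrable_const _).add (hYint.const_mul _)
  calc ∫ z, Real.exp (l * Y z) ∂m ≤ ∫ z, ((E1 + E2)/2 + ((E2 - E1)/(2*c)) * Y z) ∂m :=
        integral_mono hint1 hint2 hpt
    _ = (E1 + E2)/2 + ((E2 - E1)/(2*c)) * ∫ z, Y z ∂m := by
        rw [integral_add (integrable_const _) (hYint.const_mul _),
          integral_const, integral_const_mul]
        simp
    _ = Real.cosh (l * c) := by rw [hmean, Real.cosh_eq]; ring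
    _ ≤ Real.exp ((l*c)^2/2) := Real.cosh_le_exp_half_sq _
    _ = Real.exp (l ^ 2 * c ^ 2 / 2) := by ring_nf

lemma nuInt {Ξ : Type*} [MeasurableSpace Ξ] (P Q : Measure Ξ)
    [IsProbabilityMeasure P] [IsProbabilityMeasure Q]
    (ε : ℝ) (hε0 : 0 ≤ ε) (hε1 : ε ≤ 1) (h : Bool × Ξ → ℝ) (hm : Measurable h)
    (C : ℝ) (hC : ∀ z, |h z| ≤ C) :
    ∫ z, h z ∂(ENNReal.ofReal (1-ε) • (Measure.dirac false).prod P
        + ENNReal.ofReal ε • (Measure.dirac true).prod Q)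
      = (1-ε) * ∫ x, h (false, x) ∂P + ε * ∫ x, h (true, x) ∂Q := by
  have i1 : Integrable h ((Measure.dirac false).prod P) := intBdd hm.aestronglyMeasurable hC
  have i2 : Integrable h ((Measure.dirac true).prod Q) := intBdd hm.aestronglyMeasurable hC
  have e1 : ∫ z, h z ∂((Measure.dirac false).prod P) = ∫ x, h (false, x) ∂P := by
    rw [integral_prod _ i1, integral_dirac]
  have e2 : ∫ z, h z ∂((Measure.dirac true).prod Q) = ∫ x, h (true, x) ∂Q := by
    rw [integral_prod _ i2, integral_dirac]
  rw [integral_add_measure (i1.smul_measure ENNReal.ofReal_ne_top)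
    (i2.smul_measure ENNReal.ofReal_ne_top), integral_smul_measure, integral_smul_measure,
    ENNReal.toReal_ofReal (by linarith), ENNReal.toReal_ofReal hε0, e1, e2,
    smul_eq_mul, smul_eq_mul]

set_option maxHeartbeats 3200000 in
theorem huber_contamination_online_to_batch_high_prob
    {d : ℕ} (W : Set (EuclideanSpace ℝ (Fin d)))
    (hWne : W.Nonempty) (hWcomp : IsCompact W) (hWconv : Convex ℝ W)
    {Ξ : Type*} [MeasurableSpace Ξ]
    (P Q : Measure Ξ) [IsProbabilityMeasure P] [IsProbabilityMeasure Q]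
    (ε : ℝ) (hε0 : 0 ≤ ε) (hε1 : ε < 1)
    {Ω : Type*} [MeasurableSpace Ω] (μ : Measure Ω) [IsProbabilityMeasure μ]
    (M : ℕ → Ω → Bool) (ξ : ℕ → Ω → Ξ)
    (hmeas : ∀ t, Measurable fun ω => (M t ω, ξ t ω))
    (hiid : iIndepFun (fun t ω => (M t ω, ξ t ω)) μ)
    (hlaw : ∀ t, Measure.map (fun ω => (M t ω, ξ t ω)) μ =
      ENNReal.ofReal (1 - ε) • (Measure.dirac false).prod P
        + ENNReal.ofReal ε • (Measure.dirac true).prod Q)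
    (f : EuclideanSpace ℝ (Fin d) → Ξ → ℝ)
    (hfmeas : Measurable (Function.uncurry f))
    (hfconv : ∀ ξ', ConvexOn ℝ W fun v => f v ξ')
    (hfintP : ∀ v ∈ W, Integrable (f v) P)
    (hfintQ : ∀ v ∈ W, Integrable (f v) Q)
    (T : ℕ) (hT : 1 ≤ T)
    (w : ℕ → Ω → EuclideanSpace ℝ (Fin d))
    (hwW : ∀ t ω, w t ω ∈ W)
    (hwmeas : ∀ t, Measurable[MeasurableSpace.comap
      (fun ω (s : Fin t) => ξ s ω) inferInstance] (w t))
    (uP : EuclideanSpace ℝ (Fin d)) (huP : uP ∈ W)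
    (huPopt : ∀ v ∈ W, ∫ x, f uP x ∂P ≤ ∫ x, f v x ∂P)
    (B : ℝ) (hB : ∀ᵐ x ∂P, ∀ v ∈ W, |f v x - f uP x| ≤ B)
    (δ : ℝ) (hδ0 : 0 < δ) (hδ1 : δ ≤ 1) :
    ENNReal.ofReal (1 - δ) ≤
      μ {ω | (∫ x, f ((T : ℝ)⁻¹ • ∑ t ∈ Finset.range T, w t ω) x ∂P) - ∫ x, f uP x ∂P ≤
        (∑ t ∈ Finset.range T,
            (if M t ω = false then f (w t ω) (ξ t ω) - f uP (ξ t ω) else 0))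
          / ((1 - ε) * T)
        + 2 * B / (1 - ε) * Real.sqrt (2 / T * Real.log (1 / δ))} := by
  classical
  -- basic measurability
  have hMmeas : ∀ t, Measurable (M t) := fun t => measurable_fst.comp (hmeas t)
  have hξmeas : ∀ t, Measurable (ξ t) := fun t => measurable_snd.comp (hmeas t)
  have hwmeas' : ∀ t, Measurable (w t) := by
    intro t
    refine (hwmeas t).mono ?_ le_rfl
    exact (measurable_pi_lambda (fun ω (s : Fin t) => ξ s ω) fun s => hξmeas s).comap_le
  have hfuPmeas : Measurable (fun x => f uP x) := by
    have : (fun x => f uP x) = Function.uncurry f ∘ (fun x => (uP, x)) := rfl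
    rw [this]; exact hfmeas.comp (measurable_const.prodMk measurable_id)
  -- B is nonneg
  have hB0 : 0 ≤ B := by
    obtain ⟨x, hx⟩ := hB.exists
    simpa using hx uP huP
  -- the truncated loss difference g and its risk r
  set g : EuclideanSpace ℝ (Fin d) → Ξ → ℝ :=
    fun v x => max (-B) (min B (f v x - f uP x)) with hgdef
  have hgmeas : Measurable (Function.uncurry g) := by
    apply Measurable.max measurable_const
    apply Measurable.min measurable_const
    exact hfmeas.sub (hfuPmeas.comp measurable_snd)
  have hgbd : ∀ v x, |g v x| ≤ B := by
    intro v x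
    rw [abs_le]
    constructor
    · exact le_max_left _ _
    · exact max_le (by linarith) (min_le_left _ _)
  have hgeq : ∀ v x, |f v x - f uP x| ≤ B → g v x = f v x - f uP x := by
    intro v x hx
    show max (-B) (min B (f v x - f uP x)) = f v x - f uP x
    rw [min_eq_right (abs_le.1 hx).2, max_eq_right (abs_le.1 hx).1]
  have hgveq : ∀ v ∈ W, g v =ᵐ[P] fun x => f v x - f uP x := by
    intro v hv
    filter_upwards [hB] with x hx
    exact hgeq v x (hx v hv)
  have hgvmeas : ∀ v, Measurable (g v) := by
    intro v
    have : g v = Function.uncurry g ∘ (fun x => (v, x)) := rfl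
    rw [this]; exact hgmeas.comp (measurable_const.prodMk measurable_id)
  set r : EuclideanSpace ℝ (Fin d) → ℝ := fun v => ∫ x, g v x ∂P with hrdef
  have hrmeas : Measurable r := by
    have := hgmeas.stronglyMeasurable.integral_prod_right' (ν := P)
    exact this.measurable
  have hrbd : ∀ v, |r v| ≤ B := by
    intro v
    have := norm_integral_le_of_norm_le_const
      (μ := P) (f := g v) (C := B)
      (Filter.Eventually.of_forall fun x => by simpa [Real.norm_eq_abs] using hgbd v x)
    simpa [Real.norm_eq_abs] using this
  have hrW : ∀ v ∈ W, r v = (∫ x, f v x ∂P) - ∫ x, f uP x ∂P := by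
    intro v hv
    show (∫ x, g v x ∂P) = _
    rw [integral_congr_ae (hgveq v hv), integral_sub (hfintP v hv) (hfintP uP huP)]
  have hrpos : ∀ v ∈ W, 0 ≤ r v := by
    intro v hv
    rw [hrW v hv]
    linarith [huPopt v hv]
  -- the mixture measure ν
  set ν : Measure (Bool × Ξ) := ENNReal.ofReal (1 - ε) • (Measure.dirac false).prod P
      + ENNReal.ofReal ε • (Measure.dirac true).prod Q with hνdef
  have hνprob : IsProbabilityMeasure ν := by
    rw [← hlaw 0]
    exact Measure.isProbabilityMeasure_map (hmeas 0).aemeasurable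
  -- mean of truncated loss under ν
  have hmean : ∀ v, ∫ z : Bool × Ξ, (if z.1 = false then g v z.2 else 0) ∂ν
      = (1-ε) * r v := by
    intro v
    rw [hνdef, nuInt P Q ε hε0 hε1.le _ ?_ B ?_]
    · simp [hrdef]
    · apply Measurable.ite (measurableSet_eq_fun measurable_fst measurable_const)
      · exact (hgvmeas v).comp measurable_snd
      · exact measurable_const
    · intro z
      by_cases h : z.1 = false <;> simp [h] <;> first | exact hgbd v z.2 | exact hB0
  -- a.e. goodness of samples on inlier rounds
  have hG : ∀ t : ℕ, ∀ᵐ ω ∂μ, M t ω = false →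
      ∀ v ∈ W, |f v (ξ t ω) - f uP (ξ t ω)| ≤ B := by
    intro t
    set bad : Set Ξ := toMeasurable P {x | ¬ ∀ v ∈ W, |f v x - f uP x| ≤ B} with hbaddef
    have hbadmeas : MeasurableSet bad := measurableSet_toMeasurable _ _
    have hbad0 : P bad = 0 := by
      rw [hbaddef, measure_toMeasurable]
      exact hB
    have hkey : μ {ω | M t ω = false ∧ ξ t ω ∈ bad} = 0 := by
      have hpre : {ω | M t ω = false ∧ ξ t ω ∈ bad}
          = (fun ω => (M t ω, ξ t ω)) ⁻¹' ({false} ×ˢ bad) := by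
        ext ω
        simp only [Set.mem_setOf_eq, Set.mem_preimage, Set.mem_prod, Set.mem_singleton_iff]
      rw [hpre, ← Measure.map_apply (hmeas t) ((measurableSet_singleton false).prod hbadmeas),
        hlaw t, hνdef]
      simp only [Measure.add_apply, Measure.smul_apply, smul_eq_mul]
      rw [Measure.prod_prod, Measure.prod_prod, hbad0]
      have hd : (Measure.dirac true : Measure Bool) {false} = 0 := by
        simp [Measure.dirac_apply]
      rw [hd]
      simp
    rw [ae_iff]
    refine measure_mono_null ?_ hkey
    intro ω hω
    simp only [Set.mem_setOf_eq, not_forall] at hω ⊢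
    obtain ⟨hM, hv⟩ := hω
    exact ⟨hM, subset_toMeasurable P _ (by simpa using hv)⟩
  -- convexity of the risk
  have hriskconv : ConvexOn ℝ W (fun v => ∫ x, f v x ∂P) := by
    refine ⟨hWconv, ?_⟩
    intro x hx y hy a b ha hb hab
    have hxy : a • x + b • y ∈ W := hWconv hx hy ha hb hab
    calc ∫ x', f (a • x + b • y) x' ∂P ≤ ∫ x', (a * f x x' + b * f y x') ∂P := by
          apply integral_mono (hfintP _ hxy)
            (((hfintP x hx).const_mul a).add ((hfintP y hy).const_mul b))
          intro x'
          exact (hfconv x').2 hx hy ha hb hab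
      _ = a * ∫ x', f x x' ∂P + b * ∫ x', f y x' ∂P := by
          rw [integral_add ((hfintP x hx).const_mul a) ((hfintP y hy).const_mul b),
            integral_const_mul, integral_const_mul]
  have hTpos : (0:ℝ) < T := by exact_mod_cast hT
  -- Jensen for the averaged iterate
  have hjensen : ∀ ω, (∫ x, f ((T : ℝ)⁻¹ • ∑ t ∈ Finset.range T, w t ω) x ∂P)
      - ∫ x, f uP x ∂P ≤ (T:ℝ)⁻¹ * ∑ t ∈ Finset.range T, r (w t ω) := by
    intro ω
    have havg : (T : ℝ)⁻¹ • ∑ t ∈ Finset.range T, w t ω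
        = ∑ t ∈ Finset.range T, (T:ℝ)⁻¹ • w t ω := by
      rw [Finset.smul_sum]
    have hsum1 : ∑ _t ∈ Finset.range T, (T:ℝ)⁻¹ = 1 := by
      simp [Finset.sum_const]
      field_simp
    have := hriskconv.map_sum_le (t := Finset.range T) (w := fun _ => (T:ℝ)⁻¹)
      (p := fun t => w t ω) (fun _ _ => by positivity) hsum1 (fun t _ => hwW t ω)
    simp only [smul_eq_mul] at this
    rw [← havg] at this
    have hTne : (T:ℝ) ≠ 0 := ne_of_gt hTpos
    have heq : (T:ℝ)⁻¹ * ∑ t ∈ Finset.range T, r (w t ω)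
        = (∑ t ∈ Finset.range T, (T:ℝ)⁻¹ * ∫ x, f (w t ω) x ∂P) - ∫ x, f uP x ∂P := by
      rw [Finset.mul_sum]
      have h1 : ∀ t ∈ Finset.range T, (T:ℝ)⁻¹ * r (w t ω)
          = (T:ℝ)⁻¹ * ∫ x, f (w t ω) x ∂P - (T:ℝ)⁻¹ * ∫ x, f uP x ∂P := by
        intro t _
        rw [hrW _ (hwW t ω)]; ring
      rw [Finset.sum_congr rfl h1, Finset.sum_sub_distrib, Finset.sum_const,
        Finset.card_range, nsmul_eq_mul]
      field_simp
    rw [heq]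
    linarith [this]
  
  have hεpos : (0:ℝ) < 1 - ε := by linarith
  have hGoodAll : ∀ᵐ ω ∂μ, ∀ t, M t ω = false →
      ∀ v ∈ W, |f v (ξ t ω) - f uP (ξ t ω)| ≤ B := ae_all_iff.2 hG
  have hGood0 : μ {ω | ¬ ∀ t, M t ω = false →
      ∀ v ∈ W, |f v (ξ t ω) - f uP (ξ t ω)| ≤ B} = 0 := ae_iff.1 hGoodAll
  rcases eq_or_lt_of_le hδ1 with hδeq | hδlt
  · rw [hδeq]
    simp
  -- the log term
  set L := Real.log (1/δ) with hLdef
  have hL : 0 < L := by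
    apply Real.log_pos
    rw [lt_div_iff₀ hδ0]
    linarith
  rcases eq_or_lt_of_le hB0 with hBeq | hBpos
  · -- degenerate case B = 0
    have hsub : {ω | ∀ t, M t ω = false → ∀ v ∈ W, |f v (ξ t ω) - f uP (ξ t ω)| ≤ B}
        ⊆ {ω | (∫ x, f ((T : ℝ)⁻¹ • ∑ t ∈ Finset.range T, w t ω) x ∂P) - ∫ x, f uP x ∂P ≤
        (∑ t ∈ Finset.range T,
            (if M t ω = false then f (w t ω) (ξ t ω) - f uP (ξ t ω) else 0))
          / ((1 - ε) * T)
        + 2 * B / (1 - ε) * Real.sqrt (2 / T * Real.log (1 / δ))} := by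
      intro ω hω
      simp only [Set.mem_setOf_eq] at hω ⊢
      have hr0 : ∀ t ∈ Finset.range T, r (w t ω) = 0 := by
        intro t _
        have := hrbd (w t ω)
        rw [← hBeq] at this
        simpa using abs_eq_zero.1 (le_antisymm this (abs_nonneg _))
      have hlhs : (∫ x, f ((T : ℝ)⁻¹ • ∑ t ∈ Finset.range T, w t ω) x ∂P)
          - ∫ x, f uP x ∂P ≤ 0 := by
        have := hjensen ω
        rw [Finset.sum_congr rfl hr0] at this
        simpa using this
      have hterm : ∀ t ∈ Finset.range T,
          (if M t ω = false then f (w t ω) (ξ t ω) - f uP (ξ t ω) else 0) = 0 := by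
        intro t _
        by_cases hM : M t ω = false
        · rw [if_pos hM]
          have := hω t hM (w t ω) (hwW t ω)
          rw [← hBeq] at this
          have := abs_eq_zero.1 (le_antisymm this (abs_nonneg _))
          linarith [abs_nonneg (f (w t ω) (ξ t ω) - f uP (ξ t ω))]
        · rw [if_neg hM]
      rw [Finset.sum_congr rfl hterm, Finset.sum_const]
      rw [← hBeq]
      simp only [smul_zero, zero_div, mul_zero, zero_mul, zero_div, zero_add, zero_mul]
      simpa using hlhs
    calc ENNReal.ofReal (1 - δ) ≤ 1 := ENNReal.ofReal_le_one.2 (by linarith)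
      _ = μ Set.univ := measure_univ.symm
      _ ≤ μ {ω | ∀ t, M t ω = false → ∀ v ∈ W, |f v (ξ t ω) - f uP (ξ t ω)| ≤ B}
          + μ {ω | ¬ ∀ t, M t ω = false → ∀ v ∈ W, |f v (ξ t ω) - f uP (ξ t ω)| ≤ B} := by
          refine le_trans (measure_mono ?_) (measure_union_le _ _)
          intro ω _
          by_cases h : ∀ t, M t ω = false → ∀ v ∈ W, |f v (ξ t ω) - f uP (ξ t ω)| ≤ B
          · exact Or.inl h
          · exact Or.inr h
      _ = μ {ω | ∀ t, M t ω = false → ∀ v ∈ W, |f v (ξ t ω) - f uP (ξ t ω)| ≤ B} := by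
          rw [hGood0, add_zero]
      _ ≤ _ := measure_mono hsub
  -- main case : B > 0
  set X : ℕ → Ω → ℝ := fun t ω => if M t ω = false then g (w t ω) (ξ t ω) else 0 with hXdef
  set D : ℕ → Ω → ℝ := fun t ω => (1-ε) * r (w t ω) - X t ω with hDdef
  set S : ℕ → Ω → ℝ := fun n ω => ∑ t ∈ Finset.range n, D t ω with hSdef
  have hXmeasm : ∀ t, Measurable (X t) := by
    intro t
    simp only [hXdef]
    exact Measurable.ite ((hMmeas t) (measurableSet_singleton false))
      (hgmeas.comp ((hwmeas' t).prodMk (hξmeas t))) measurable_const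
  have hXbd : ∀ t ω, |X t ω| ≤ B := by
    intro t ω
    simp only [hXdef]
    by_cases hM : M t ω = false
    · rw [if_pos hM]; exact hgbd _ _
    · rw [if_neg hM]; simpa using hB0
  have hrwbd : ∀ v, |(1-ε) * r v| ≤ B := by
    intro v
    rw [abs_mul, abs_of_nonneg hεpos.le]
    have := hrbd v
    nlinarith [abs_nonneg (r v)]
  have hDbd : ∀ t ω, |D t ω| ≤ 2*B := by
    intro t ω
    simp only [hDdef]
    calc |(1-ε) * r (w t ω) - X t ω| ≤ |(1-ε) * r (w t ω)| + |X t ω| := abs_sub _ _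
      _ ≤ B + B := add_le_add (hrwbd _) (hXbd t ω)
      _ = 2*B := by ring
  have hDmeasm : ∀ t, Measurable (D t) := by
    intro t
    simp only [hDdef]
    exact ((hrmeas.comp (hwmeas' t)).const_mul _).sub (hXmeasm t)
  have hSmeasm : ∀ n, Measurable (S n) := by
    intro n
    simp only [hSdef]
    exact Finset.measurable_sum _ fun t _ => hDmeasm t
  have hSbd : ∀ n ω, |S n ω| ≤ n * (2*B) := by
    intro n ω
    simp only [hSdef]
    calc |∑ t ∈ Finset.range n, D t ω| ≤ ∑ t ∈ Finset.range n, |D t ω| :=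
        Finset.abs_sum_le_sum_abs _ _
      _ ≤ Finset.card (Finset.range n) • (2*B) :=
        Finset.sum_le_card_nsmul _ _ _ fun t _ => hDbd t ω
      _ = n * (2*B) := by rw [Finset.card_range, nsmul_eq_mul]
  -- per-round mgf bound
  have hB2 : (0:ℝ) < 2*B := by linarith
  have hitemeas : ∀ v, Measurable (fun z : Bool × Ξ => if z.1 = false then g v z.2 else 0) := by
    intro v
    exact Measurable.ite (measurable_fst (measurableSet_singleton false))
      ((hgvmeas v).comp measurable_snd) measurable_const
  have hitebd : ∀ v (z : Bool × Ξ), |if z.1 = false then g v z.2 else 0| ≤ B := by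
    intro v z
    by_cases h : z.1 = false
    · rw [if_pos h]; exact hgbd _ _
    · rw [if_neg h]; simpa using hB0
  have hstep : ∀ (l : ℝ) v, ∫ z : Bool × Ξ,
      Real.exp (l * ((1-ε) * r v - (if z.1 = false then g v z.2 else 0))) ∂ν
      ≤ Real.exp (l^2 * (2*B)^2/2) := by
    intro l v
    haveI := hνprob
    refine mgfAux ν _ (measurable_const.sub (hitemeas v)) (2*B) hB2 ?_ ?_ l
    · intro z
      calc |(1-ε) * r v - (if z.1 = false then g v z.2 else 0)|
          ≤ |(1-ε) * r v| + |if z.1 = false then g v z.2 else 0| := abs_sub _ _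
        _ ≤ B + B := add_le_add (hrwbd v) (hitebd v z)
        _ = 2*B := by ring
    · show ∫ z, ((1-ε) * r v - (if z.1 = false then g v z.2 else 0)) ∂ν = 0
      rw [integral_sub (integrable_const _)
        (intBdd (hitemeas v).aestronglyMeasurable (hitebd v)), integral_const, hmean v]
      simp
  -- the inductive mgf bound
  have key : ∀ (l : ℝ) (n : ℕ), ∫ ω, Real.exp (l * S n ω) ∂μ
      ≤ Real.exp (n * (l^2 * (2*B)^2/2)) := by
    intro l n
    induction n with
    | zero => simp [hSdef]
    | succ n ih =>
      haveI := hνprob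
      set c : ℝ := n * (2*B) with hcdef
      have hc0 : 0 ≤ c := by positivity
      set φ : ℝ → ℝ := fun s => max (-c) (min c s) with hφdef
      have hφmeas : Measurable φ :=
        measurable_const.max (measurable_const.min measurable_id)
      have hφbd : ∀ s, |φ s| ≤ c := by
        intro s
        rw [abs_le]
        exact ⟨le_max_left _ _, max_le (by linarith) (min_le_left _ _)⟩
      have hφS : ∀ ω, φ (S n ω) = S n ω := by
        intro ω
        have := hSbd n ω
        simp only [hφdef]
        rw [min_eq_right (abs_le.1 this).2, max_eq_right (abs_le.1 this).1]
      set H : ℝ × (EuclideanSpace ℝ (Fin d)) → Bool × Ξ → ℝ := fun p z =>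
        Real.exp (l * (φ p.1 + ((1-ε) * r p.2 - (if z.1 = false then g p.2 z.2 else 0))))
        with hHdef
      have hHmeas : Measurable (fun q : (ℝ × (EuclideanSpace ℝ (Fin d))) × (Bool × Ξ) =>
          H q.1 q.2) := by
        apply Measurable.exp
        apply Measurable.const_mul
        apply Measurable.add
        · exact hφmeas.comp (measurable_fst.comp measurable_fst)
        · apply Measurable.sub
          · exact (hrmeas.comp (measurable_snd.comp measurable_fst)).const_mul _
          · apply Measurable.ite
            · exact (measurable_fst.comp measurable_snd) (measurableSet_singleton false)
            · exact hgmeas.comp ((measurable_snd.comp measurable_fst).prodMk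
                (measurable_snd.comp measurable_snd))
            · exact measurable_const
      have hHbd : ∀ q : (ℝ × (EuclideanSpace ℝ (Fin d))) × (Bool × Ξ),
          |H q.1 q.2| ≤ Real.exp (|l| * (c + 2*B)) := by
        intro q
        rw [hHdef, abs_of_pos (Real.exp_pos _)]
        apply Real.exp_le_exp.2
        calc l * (φ q.1.1 + ((1-ε) * r q.1.2 - (if q.2.1 = false then g q.1.2 q.2.2 else 0)))
            ≤ |l * (φ q.1.1 + ((1-ε) * r q.1.2 - (if q.2.1 = false then g q.1.2 q.2.2 else 0)))| :=
            le_abs_self _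
          _ = |l| * |φ q.1.1 + ((1-ε) * r q.1.2 - (if q.2.1 = false then g q.1.2 q.2.2 else 0))| :=
            abs_mul _ _
          _ ≤ |l| * (c + 2*B) := by
            gcongr
            calc |φ q.1.1 + ((1-ε) * r q.1.2 - (if q.2.1 = false then g q.1.2 q.2.2 else 0))|
                ≤ |φ q.1.1| + |(1-ε) * r q.1.2 - (if q.2.1 = false then g q.1.2 q.2.2 else 0)| :=
                abs_add_le _ _
              _ ≤ c + 2*B := by
                refine add_le_add (hφbd _) ?_
                calc |(1-ε) * r q.1.2 - (if q.2.1 = false then g q.1.2 q.2.2 else 0)|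
                    ≤ |(1-ε) * r q.1.2| + |if q.2.1 = false then g q.1.2 q.2.2 else 0| :=
                    abs_sub _ _
                  _ ≤ B + B := add_le_add (hrwbd _) (hitebd _ _)
                  _ = 2*B := by ring
      set U : Ω → ℝ × (EuclideanSpace ℝ (Fin d)) := fun ω => (S n ω, w n ω) with hUdef
      set V : Ω → Bool × Ξ := fun ω => (M n ω, ξ n ω) with hVdef
      have hUmeas : Measurable U := (hSmeasm n).prodMk (hwmeas' n)
      have hVmeas : Measurable V := hmeas n
      -- independence of U and V
      have hIndep : IndepFun U V μ := by
        have hdisj : Disjoint (Finset.range n) ({n} : Finset ℕ) := by simp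
        have hpairs := hiid.indepFun_finset (Finset.range n) {n} hdisj hmeas
        set Jt : Ω → ({ i // i ∈ Finset.range n } → Bool × Ξ) :=
          fun ω i => (M (i:ℕ) ω, ξ (i:ℕ) ω) with hJtdef
        set Kt : Ω → ({ i // i ∈ ({n} : Finset ℕ) } → Bool × Ξ) :=
          fun ω i => (M (i:ℕ) ω, ξ (i:ℕ) ω) with hKtdef
        have hJm : ∀ t : ℕ, t < n →
            Measurable[MeasurableSpace.comap Jt inferInstance] (fun ω => (M t ω, ξ t ω)) := by
          intro t ht
          have heq : (fun ω => (M t ω, ξ t ω)) =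
              (fun p : { i // i ∈ Finset.range n } → Bool × Ξ =>
                p ⟨t, Finset.mem_range.2 ht⟩) ∘ Jt := rfl
          rw [heq]
          exact (measurable_pi_apply _).comp (Measurable.of_comap_le le_rfl)
        have hwJ : ∀ t : ℕ, t ≤ n →
            Measurable[MeasurableSpace.comap Jt inferInstance] (w t) := by
          intro t ht
          refine (hwmeas t).mono ?_ le_rfl
          have hcomp : (fun ω (s : Fin t) => ξ s ω)
              = (fun (p : { i // i ∈ Finset.range n } → Bool × Ξ) (s : Fin t) =>
                  (p ⟨(s:ℕ), Finset.mem_range.2 (lt_of_lt_of_le s.2 ht)⟩).2) ∘ Jt := rfl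
          rw [hcomp, ← MeasurableSpace.comap_comp]
          refine MeasurableSpace.comap_mono ?_
          refine Measurable.comap_le ?_
          exact measurable_pi_lambda _ fun s => measurable_snd.comp (measurable_pi_apply _)
        have hXJ : ∀ t : ℕ, t < n →
            Measurable[MeasurableSpace.comap Jt inferInstance] (X t) := by
          intro t ht
          have hMt : Measurable[MeasurableSpace.comap Jt inferInstance] (M t) :=
            measurable_fst.comp (hJm t ht)
          have hξt : Measurable[MeasurableSpace.comap Jt inferInstance] (ξ t) :=
            measurable_snd.comp (hJm t ht)
          simp only [hXdef]
          exact Measurable.ite (hMt (measurableSet_singleton false))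
            (hgmeas.comp ((hwJ t ht.le).prodMk hξt)) measurable_const
        have hSJ : Measurable[MeasurableSpace.comap Jt inferInstance] (S n) := by
          simp only [hSdef]
          refine Finset.measurable_sum _ fun t ht => ?_
          have htn : t < n := Finset.mem_range.1 ht
          simp only [hDdef]
          exact ((hrmeas.comp (hwJ t htn.le)).const_mul _).sub (hXJ t htn)
        have hUJ : Measurable[MeasurableSpace.comap Jt inferInstance] U :=
          hSJ.prodMk (hwJ n le_rfl)
        have hVK : Measurable[MeasurableSpace.comap Kt inferInstance] V := by
          have heq : V = (fun p : ({n} : Finset ℕ) → Bool × Ξ =>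
              p ⟨n, Finset.mem_singleton_self n⟩) ∘ Kt := rfl
          rw [heq]
          exact (measurable_pi_apply _).comp (Measurable.of_comap_le le_rfl)
        exact indep_of_indep_of_le_right
          (indep_of_indep_of_le_left hpairs hUJ.comap_le) hVK.comap_le
      -- factorize the integral
      haveI : IsProbabilityMeasure (μ.map U) := Measure.isProbabilityMeasure_map hUmeas.aemeasurable
      have hmapV : μ.map V = ν := hlaw n
      have hstep2 : ∀ ω, Real.exp (l * S (n+1) ω) = H (U ω) (V ω) := by
        intro ω
        rw [hHdef]
        simp only [hUdef, hVdef]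
        rw [hφS ω]
        congr 1
        have : S (n+1) ω = S n ω + D n ω := by
          simp only [hSdef]
          exact Finset.sum_range_succ _ _
        rw [this]
      have hintprod : Integrable (fun q : (ℝ × (EuclideanSpace ℝ (Fin d))) × (Bool × Ξ) =>
          H q.1 q.2) ((μ.map U).prod ν) :=
        intBdd hHmeas.aestronglyMeasurable hHbd
      have hinner_meas : StronglyMeasurable (fun p : ℝ × (EuclideanSpace ℝ (Fin d)) =>
          ∫ z, H p z ∂ν) := hHmeas.stronglyMeasurable.integral_prod_right'
      have hinner_bd : ∀ p, |∫ z, H p z ∂ν| ≤ Real.exp (|l| * (c + 2*B)) := by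
        intro p
        have := norm_integral_le_of_norm_le_const (μ := ν) (f := fun z => H p z)
          (C := Real.exp (|l| * (c + 2*B)))
          (Filter.Eventually.of_forall fun z => by
            simpa [Real.norm_eq_abs] using hHbd (p, z))
        simpa [Real.norm_eq_abs] using this
      have hfact : ∫ ω, Real.exp (l * S (n+1) ω) ∂μ
          = ∫ ω, (∫ z, H (U ω) z ∂ν) ∂μ := by
        calc ∫ ω, Real.exp (l * S (n+1) ω) ∂μ = ∫ ω, H (U ω) (V ω) ∂μ := by
              exact integral_congr_ae (Filter.Eventually.of_forall hstep2)
          _ = ∫ q, H q.1 q.2 ∂(μ.map (fun ω => (U ω, V ω))) := by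
              rw [integral_map (hUmeas.prodMk hVmeas).aemeasurable
                hHmeas.aestronglyMeasurable]
          _ = ∫ q, H q.1 q.2 ∂((μ.map U).prod ν) := by
              rw [(indepFun_iff_map_prod_eq_prod_map_map hUmeas.aemeasurable
                hVmeas.aemeasurable).1 hIndep, hmapV]
          _ = ∫ p, ∫ z, H p z ∂ν ∂(μ.map U) := integral_prod _ hintprod
          _ = ∫ ω, (∫ z, H (U ω) z ∂ν) ∂μ := by
              rw [integral_map hUmeas.aemeasurable hinner_meas.aestronglyMeasurable]
      have hptbd : ∀ ω, (∫ z, H (U ω) z ∂ν)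
          ≤ Real.exp (l * S n ω) * Real.exp (l^2 * (2*B)^2/2) := by
        intro ω
        have hHsplit : ∀ z : Bool × Ξ, H (U ω) z = Real.exp (l * S n ω) *
            Real.exp (l * ((1-ε) * r (w n ω) - (if z.1 = false then g (w n ω) z.2 else 0))) := by
          intro z
          rw [hHdef]
          simp only [hUdef]
          rw [hφS ω, ← Real.exp_add]
          congr 1
          ring
        calc (∫ z, H (U ω) z ∂ν) = Real.exp (l * S n ω) * ∫ z : Bool × Ξ,
              Real.exp (l * ((1-ε) * r (w n ω)
                - (if z.1 = false then g (w n ω) z.2 else 0))) ∂ν := by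
              rw [← integral_const_mul]
              exact integral_congr_ae (Filter.Eventually.of_forall hHsplit)
          _ ≤ Real.exp (l * S n ω) * Real.exp (l^2 * (2*B)^2/2) :=
              mul_le_mul_of_nonneg_left (hstep l (w n ω)) (Real.exp_pos _).le
      have hint1 : Integrable (fun ω => ∫ z, H (U ω) z ∂ν) μ := by
        refine intBdd ((hinner_meas.measurable.comp hUmeas).aestronglyMeasurable)
          (C := Real.exp (|l| * (c + 2*B))) ?_
        exact fun ω => hinner_bd (U ω)
      have hint2 : Integrable (fun ω => Real.exp (l * S n ω) * Real.exp (l^2 * (2*B)^2/2)) μ := by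
        refine intBdd ((((hSmeasm n).const_mul l).exp.mul_const _).aestronglyMeasurable)
          (C := Real.exp (|l| * (n * (2*B))) * Real.exp (l^2 * (2*B)^2/2)) ?_
        intro ω
        rw [abs_mul, abs_of_pos (Real.exp_pos _), abs_of_pos (Real.exp_pos _)]
        refine mul_le_mul_of_nonneg_right ?_ (Real.exp_pos _).le
        apply Real.exp_le_exp.2
        calc l * S n ω ≤ |l * S n ω| := le_abs_self _
          _ = |l| * |S n ω| := abs_mul _ _
          _ ≤ |l| * (n * (2*B)) := by gcongr; exact hSbd n ω
      calc ∫ ω, Real.exp (l * S (n+1) ω) ∂μ = ∫ ω, (∫ z, H (U ω) z ∂ν) ∂μ := hfact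
        _ ≤ ∫ ω, Real.exp (l * S n ω) * Real.exp (l^2 * (2*B)^2/2) ∂μ :=
          integral_mono hint1 hint2 hptbd
        _ = (∫ ω, Real.exp (l * S n ω) ∂μ) * Real.exp (l^2 * (2*B)^2/2) := by
          rw [integral_mul_const]
        _ ≤ Real.exp (n * (l^2 * (2*B)^2/2)) * Real.exp (l^2 * (2*B)^2/2) :=
          mul_le_mul_of_nonneg_right ih (Real.exp_pos _).le
        _ = Real.exp ((n+1 : ℕ) * (l^2 * (2*B)^2/2)) := by
          rw [← Real.exp_add]
          congr 1
          push_cast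
          ring
  -- Chernoff bound
  set s' : ℝ := 2*B*Real.sqrt (2*T*L) with hs'def
  have hs'0 : 0 ≤ s' := by positivity
  set l : ℝ := s' / (4*T*B^2) with hldef
  have hl0 : 0 ≤ l := by positivity
  have hTneR : (T:ℝ) ≠ 0 := ne_of_gt hTpos
  have hBne : B ≠ 0 := ne_of_gt hBpos
  have hintT : Integrable (fun ω => Real.exp (l * S T ω)) μ := by
    refine intBdd (((hSmeasm T).const_mul l).exp.aestronglyMeasurable)
      (C := Real.exp (|l| * (T * (2*B)))) ?_
    intro ω
    rw [abs_of_pos (Real.exp_pos _)]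
    apply Real.exp_le_exp.2
    calc l * S T ω ≤ |l * S T ω| := le_abs_self _
      _ = |l| * |S T ω| := abs_mul _ _
      _ ≤ |l| * (T * (2*B)) := by gcongr; exact hSbd T ω
  have hmark := measure_ge_le_exp_mul_mgf (μ := μ) (X := S T) s' hl0 hintT
  have hmgfle : mgf (S T) μ l ≤ Real.exp (T * (l^2 * (2*B)^2/2)) := key l T
  have hs2 : s'^2 = 8 * T * L * B^2 := by
    rw [hs'def, mul_pow, mul_pow, Real.sq_sqrt (by positivity)]
    ring
  have hexpo : -l * s' + T * (l^2 * (2*B)^2/2) = -L := by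
    have h3 : -l * s' + T * (l ^ 2 * (2 * B) ^ 2 / 2) = -(s' ^ 2) / (8 * T * B ^ 2) := by
      rw [hldef]
      field_simp
      ring
    rw [h3, hs2]
    field_simp
  have hδval : Real.exp (-l * s') * Real.exp (T * (l^2 * (2*B)^2/2)) = δ := by
    rw [← Real.exp_add, hexpo, hLdef, Real.log_div one_ne_zero (ne_of_gt hδ0),
      Real.log_one, zero_sub, neg_neg, Real.exp_log hδ0]
  have hmark2 : (μ {ω | s' ≤ S T ω}).toReal ≤ δ := by
    calc (μ {ω | s' ≤ S T ω}).toReal ≤ Real.exp (-l * s') * mgf (S T) μ l := hmark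
      _ ≤ Real.exp (-l * s') * Real.exp (T * (l^2 * (2*B)^2/2)) :=
        mul_le_mul_of_nonneg_left hmgfle (Real.exp_pos _).le
      _ = δ := hδval
  have hμA : μ {ω | s' ≤ S T ω} ≤ ENNReal.ofReal δ := by
    rw [← ENNReal.ofReal_toReal (measure_ne_top μ {ω | s' ≤ S T ω})]
    exact ENNReal.ofReal_le_ofReal hmark2
  -- inclusion of events
  have hsqrt : Real.sqrt (2*T*L) / T = Real.sqrt (2/T*L) := by
    have h1 : 2/(T:ℝ)*L = (2*T*L)/(T:ℝ)^2 := by field_simp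
    rw [h1, Real.sqrt_div (by positivity) ((T:ℝ)^2), Real.sqrt_sq hTpos.le]
  have hincl : ∀ ω, ¬ (s' ≤ S T ω) →
      (∀ t, M t ω = false → ∀ v ∈ W, |f v (ξ t ω) - f uP (ξ t ω)| ≤ B) →
      (∫ x, f ((T : ℝ)⁻¹ • ∑ t ∈ Finset.range T, w t ω) x ∂P) - ∫ x, f uP x ∂P ≤
        (∑ t ∈ Finset.range T,
            (if M t ω = false then f (w t ω) (ξ t ω) - f uP (ξ t ω) else 0))
          / ((1 - ε) * T)
        + 2 * B / (1 - ε) * Real.sqrt (2 / T * Real.log (1 / δ)) := by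
    intro ω hA hGd
    have hST : S T ω ≤ s' := (not_le.1 hA).le
    have hsumeq : (∑ t ∈ Finset.range T,
        (if M t ω = false then f (w t ω) (ξ t ω) - f uP (ξ t ω) else 0))
        = ∑ t ∈ Finset.range T, X t ω := by
      refine Finset.sum_congr rfl fun t _ => ?_
      simp only [hXdef]
      by_cases hM : M t ω = false
      · rw [if_pos hM, if_pos hM, hgeq _ _ (hGd t hM (w t ω) (hwW t ω))]
      · rw [if_neg hM, if_neg hM]
    have hXD : ∑ t ∈ Finset.range T, (1-ε) * r (w t ω)
        = (∑ t ∈ Finset.range T, X t ω) + S T ω := by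
      simp only [hSdef, hDdef]
      rw [← Finset.sum_add_distrib]
      refine Finset.sum_congr rfl fun t _ => ?_
      ring
    have hchain : (T:ℝ)⁻¹ * ∑ t ∈ Finset.range T, r (w t ω)
        ≤ ((∑ t ∈ Finset.range T, X t ω) + s') / ((1-ε)*T) := by
      have he : (T:ℝ)⁻¹ * ∑ t ∈ Finset.range T, r (w t ω)
          = (∑ t ∈ Finset.range T, (1-ε) * r (w t ω)) / ((1-ε)*T) := by
        rw [← Finset.mul_sum]
        field_simp
      rw [he, hXD]
      exact (div_le_div_iff_of_pos_right (by positivity)).2 (by linarith)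
    have hs'div : s'/((1-ε)*T) = 2*B/(1-ε) * Real.sqrt (2/T*L) := by
      rw [hs'def, ← hsqrt]
      field_simp
    calc (∫ x, f ((T : ℝ)⁻¹ • ∑ t ∈ Finset.range T, w t ω) x ∂P) - ∫ x, f uP x ∂P
        ≤ (T:ℝ)⁻¹ * ∑ t ∈ Finset.range T, r (w t ω) := hjensen ω
      _ ≤ ((∑ t ∈ Finset.range T, X t ω) + s') / ((1-ε)*T) := hchain
      _ = (∑ t ∈ Finset.range T, X t ω) / ((1-ε)*T) + s' / ((1-ε)*T) := add_div _ _ _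
      _ = (∑ t ∈ Finset.range T,
            (if M t ω = false then f (w t ω) (ξ t ω) - f uP (ξ t ω) else 0))
          / ((1 - ε) * T) + 2 * B / (1 - ε) * Real.sqrt (2 / T * L) := by
          rw [hsumeq, hs'div]
  -- endgame: measure arithmetic
  have hsub2 : {ω | ¬ s' ≤ S T ω} ∩
      {ω | ∀ t, M t ω = false → ∀ v ∈ W, |f v (ξ t ω) - f uP (ξ t ω)| ≤ B} ⊆
      {ω | (∫ x, f ((T : ℝ)⁻¹ • ∑ t ∈ Finset.range T, w t ω) x ∂P) - ∫ x, f uP x ∂P ≤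
        (∑ t ∈ Finset.range T,
            (if M t ω = false then f (w t ω) (ξ t ω) - f uP (ξ t ω) else 0))
          / ((1 - ε) * T)
        + 2 * B / (1 - ε) * Real.sqrt (2 / T * Real.log (1 / δ))} :=
    fun ω hω => hincl ω hω.1 hω.2
  have hAc : μ {ω | ¬ s' ≤ S T ω} ≤
      μ {ω | (∫ x, f ((T : ℝ)⁻¹ • ∑ t ∈ Finset.range T, w t ω) x ∂P) - ∫ x, f uP x ∂P ≤
        (∑ t ∈ Finset.range T,
            (if M t ω = false then f (w t ω) (ξ t ω) - f uP (ξ t ω) else 0))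
          / ((1 - ε) * T)
        + 2 * B / (1 - ε) * Real.sqrt (2 / T * Real.log (1 / δ))} := by
    calc μ {ω | ¬ s' ≤ S T ω}
        ≤ μ (({ω | ¬ s' ≤ S T ω} ∩
          {ω | ∀ t, M t ω = false → ∀ v ∈ W, |f v (ξ t ω) - f uP (ξ t ω)| ≤ B}) ∪
          {ω | ¬ ∀ t, M t ω = false → ∀ v ∈ W, |f v (ξ t ω) - f uP (ξ t ω)| ≤ B}) := by
          refine measure_mono fun ω h => ?_
          by_cases hg : ∀ t, M t ω = false → ∀ v ∈ W, |f v (ξ t ω) - f uP (ξ t ω)| ≤ B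
          · exact Or.inl ⟨h, hg⟩
          · exact Or.inr hg
      _ ≤ μ ({ω | ¬ s' ≤ S T ω} ∩
          {ω | ∀ t, M t ω = false → ∀ v ∈ W, |f v (ξ t ω) - f uP (ξ t ω)| ≤ B}) +
          μ {ω | ¬ ∀ t, M t ω = false → ∀ v ∈ W, |f v (ξ t ω) - f uP (ξ t ω)| ≤ B} :=
          measure_union_le _ _
      _ = μ ({ω | ¬ s' ≤ S T ω} ∩
          {ω | ∀ t, M t ω = false → ∀ v ∈ W, |f v (ξ t ω) - f uP (ξ t ω)| ≤ B}) := by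
          rw [hGood0, add_zero]
      _ ≤ _ := measure_mono hsub2
  have huniv : (1:ENNReal) ≤ μ {ω | s' ≤ S T ω} + μ {ω | ¬ s' ≤ S T ω} := by
    rw [← measure_univ (μ := μ)]
    refine le_trans (measure_mono fun ω _ => ?_) (measure_union_le _ _)
    by_cases h : s' ≤ S T ω
    · exact Or.inl h
    · exact Or.inr h
  calc ENNReal.ofReal (1 - δ) = 1 - ENNReal.ofReal δ := by
        rw [ENNReal.ofReal_sub _ hδ0.le, ENNReal.ofReal_one]
    _ ≤ μ {ω | ¬ s' ≤ S T ω} := by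
        refine tsub_le_iff_right.2 ?_
        calc (1:ENNReal) ≤ μ {ω | s' ≤ S T ω} + μ {ω | ¬ s' ≤ S T ω} := huniv
          _ ≤ ENNReal.ofReal δ + μ {ω | ¬ s' ≤ S T ω} := add_le_add hμA le_rfl
          _ = μ {ω | ¬ s' ≤ S T ω} + ENNReal.ofReal δ := add_comm _ _
    _ ≤ _ := hAc
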